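/- Q̲* x-relationship: for any history h with τ = g(h) and decision vector x ∈ B^d, and any i ≤ d, Q̲*(τ ⟨x o r_⊥⟩_{<i}, x_i) = γ^((d-i)/d) · Q*(h, Π*(h, x_{≤i})), where Π*(h, x_{≤i}) ∈ argmax_{a ∈ A(x_{≤i})} Q*(h, a). Equivalently Q̲*(τ ⟨x o r_⊥⟩_{<i}, x_i) = λ^(d-i) max_{a ∈ A(x_{≤i})} Q*(h, a). In particular for i = d, Q̲*(τ ⟨x o r_⊥⟩_{<d}, x_d) = Q*(h, D(x)). -/

import Mathlib

/-- Finite interaction histories: an initial observation-reward pair followed by a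
list of (decision, observation, reward) triples. -/
abbrev Hist (O R A : Type) : Type := (O × R) × List (A × O × R)

namespace Seq

variable {O R A B : Type} {m : ℕ}

/-- The most recent observation of a history. -/
def lastObs (h : Hist O R A) : O :=
  match h.2.getLast? with
  | some s => s.2.1
  | none => h.1.1

/-- Extending a history by one interaction step. -/
def ext (h : Hist O R A) (a : A) (o : O) (r : R) : Hist O R A :=
  (h.1, h.2 ++ [(a, o, r)])

/-- Appending a block of steps to a history. -/
def app (τ : Hist O R B) (l : List (B × O × R)) : Hist O R B := (τ.1, τ.2 ++ l)

/-- `inter x o r⊥ i` is the interleaved block `⟨x o r⊥⟩_{<i}`: the first `i`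
decision symbols of the code `x ∈ B^(m+1)`, each followed by the dummy
observation `o` and dummy reward `r⊥`. -/
def inter (x : Fin (m + 1) → B) (o : O) (rbot : R) (i : ℕ) : List (B × O × R) :=
  ((List.ofFn x).take i).map fun b => (b, o, rbot)

/-- The body of the history transformation `g`, keeping track of the current last
observation. Each original step `(a, o', r')` taken at last observation `o` is
replaced by `C(a)₁ o r⊥ … C(a)_{d-1} o r⊥ C(a)_d o' r'` with `d = m + 1`. -/
def gList (C : A → Fin (m + 1) → B) (rbot : R) : O → List (A × O × R) → List (B × O × R)
  | _, [] => []
  | o, (a, o', r') :: t =>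
      (inter (C a) o rbot m ++ [(C a (Fin.last m), o', r')]) ++ gList C rbot o' t

/-- The history transformation function `g : H → H̲` sequentializing each action
into its `B`-ary code. -/
def g (C : A → Fin (m + 1) → B) (rbot : R) (h : Hist O R A) : Hist O R B :=
  (h.1, gList C rbot h.1.1 h.2)

end Seq

namespace StructAux
open Seq
variable {O R A B : Type} {m : ℕ}

lemma inter_length (x : Fin (m+1) → B) (o : O) (rbot : R) (i : ℕ) (hi : i ≤ m + 1) :
    (Seq.inter x o rbot i).length = i := by
  simp [Seq.inter, hi]

lemma gList_length (C : A → Fin (m+1) → B) (rbot : R) (o : O) (t : List (A × O × R)) :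
    (Seq.gList C rbot o t).length = (m + 1) * t.length := by
  induction t generalizing o with
  | nil => simp [Seq.gList]
  | cons s t ih =>
      obtain ⟨a, o', r'⟩ := s
      simp [Seq.gList, ih, Seq.inter]
      ring

lemma inter_succ (x : Fin (m+1) → B) (o : O) (rbot : R) (k : ℕ) (hk : k < m + 1) :
    Seq.inter x o rbot (k + 1) = Seq.inter x o rbot k ++ [(x ⟨k, hk⟩, o, rbot)] := by
  unfold Seq.inter
  rw [List.take_succ]
  have h : (List.ofFn x)[k]? = some (x ⟨k, hk⟩) := by
    rw [List.getElem?_eq_getElem (by simpa using hk)]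
    rw [List.getElem_ofFn]
  rw [h]
  simp

lemma inter_congr (x y : Fin (m+1) → B) (o : O) (rbot : R) (k : ℕ)
    (h : ∀ j : Fin (m+1), j.val < k → x j = y j) :
    Seq.inter x o rbot k = Seq.inter y o rbot k := by
  unfold Seq.inter
  congr 1
  apply List.ext_getElem (by simp)
  intro i h1 h2
  simp only [List.getElem_take, List.getElem_ofFn]
  rw [List.length_take, List.length_ofFn] at h2
  exact h ⟨i, by omega⟩ (show i < k by omega)

lemma inter_zero (x : Fin (m+1) → B) (o : O) (rbot : R) : Seq.inter x o rbot 0 = [] := rfl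

lemma app_nil (τ : Hist O R B) : Seq.app τ [] = τ := by simp [Seq.app]

lemma ext_app (τ : Hist O R B) (l : List (B × O × R)) (b : B) (o : O) (r : R) :
    Seq.ext (Seq.app τ l) b o r = Seq.app τ (l ++ [(b, o, r)]) := by
  simp [Seq.ext, Seq.app]

/-- last observation helper on lists -/
def lastO (o : O) (t : List (A × O × R)) : O := (t.getLast?.map fun s => s.2.1).getD o

lemma lastObs_eq (h : Hist O R A) : Seq.lastObs h = lastO h.1.1 h.2 := by
  unfold Seq.lastObs lastO
  cases h.2.getLast? <;> rfl

lemma lastO_append (o : O) (l1 l2 : List (A × O × R)) :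
    lastO o (l1 ++ l2) = lastO (lastO o l1) l2 := by
  unfold lastO
  rw [List.getLast?_append]
  cases l2.getLast? <;> simp

lemma lastO_concat (o : O) (l : List (A × O × R)) (s : A × O × R) :
    lastO o (l ++ [s]) = s.2.1 := by
  unfold lastO
  rw [List.getLast?_concat]
  rfl

lemma lastO_cons (o : O) (s : A × O × R) (t : List (A × O × R)) :
    lastO o (s :: t) = lastO s.2.1 t := by
  have : s :: t = [s] ++ t := rfl
  rw [this, lastO_append]
  rfl

lemma gList_append (C : A → Fin (m+1) → B) (rbot : R) (o : O) (t : List (A × O × R))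
    (a : A) (o' : O) (r' : R) :
    Seq.gList C rbot o (t ++ [(a, o', r')]) =
      Seq.gList C rbot o t ++
        (Seq.inter (C a) (lastO o t) rbot m ++ [(C a (Fin.last m), o', r')]) := by
  induction t generalizing o with
  | nil => simp [Seq.gList, lastO]
  | cons s t ih =>
      obtain ⟨a1, o1, r1⟩ := s
      rw [List.cons_append]
      show (Seq.inter (C a1) o rbot m ++ [(C a1 (Fin.last m), o1, r1)]) ++
          Seq.gList C rbot o1 (t ++ [(a, o', r')]) = _
      rw [ih o1, lastO_cons]
      show _ = (Seq.inter (C a1) o rbot m ++ [(C a1 (Fin.last m), o1, r1)]) ++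
          Seq.gList C rbot o1 t ++
          (Seq.inter (C a) (lastO o1 t) rbot m ++ [(C a (Fin.last m), o', r')])
      simp only [List.append_assoc]

lemma lastO_gList (C : A → Fin (m+1) → B) (rbot : R) (o : O) (t : List (A × O × R)) :
    lastO o (Seq.gList C rbot o t) = lastO o t := by
  induction t generalizing o with
  | nil => rfl
  | cons s t ih =>
      obtain ⟨a, o', r'⟩ := s
      show lastO o ((Seq.inter (C a) o rbot m ++ [(C a (Fin.last m), o', r')]) ++
        Seq.gList C rbot o' t) = _
      rw [lastO_append, lastO_concat, ih o', lastO_cons]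

/-- last obs of the partial-block histories is lastObs h -/
lemma lastObs_T (C : A → Fin (m+1) → B) (rbot : R) (h : Hist O R A)
    (x : Fin (m+1) → B) (k : ℕ) :
    Seq.lastObs (Seq.app (Seq.g C rbot h) (Seq.inter x (Seq.lastObs h) rbot k)) =
      Seq.lastObs h := by
  rw [lastObs_eq]
  show lastO h.1.1 (Seq.gList C rbot h.1.1 h.2 ++ Seq.inter x (Seq.lastObs h) rbot k) = _
  rw [lastO_append, lastO_gList, ← lastObs_eq]
  unfold lastO Seq.inter
  cases hc : (((List.ofFn x).take k).map fun b => (b, Seq.lastObs h, rbot)).getLast? with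
  | none => rfl
  | some s =>
      have hs : s.2.1 = Seq.lastObs h := by
        have := List.mem_of_getLast? hc
        simp only [List.mem_map] at this
        obtain ⟨b, _, hb⟩ := this
        rw [← hb]
      simp [hs]

lemma g_ext (C : A → Fin (m+1) → B) (rbot : R) (h : Hist O R A) (a : A) (o' : O) (r' : R) :
    Seq.g C rbot (Seq.ext h a o' r') =
      Seq.app (Seq.g C rbot h)
        (Seq.inter (C a) (Seq.lastObs h) rbot m ++ [(C a (Fin.last m), o', r')]) := by
  unfold Seq.g Seq.ext Seq.app
  simp only
  rw [gList_append, ← lastObs_eq]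

lemma T_length (C : A → Fin (m+1) → B) (rbot : R) (h : Hist O R A)
    (x : Fin (m+1) → B) (o : O) (k : ℕ) (hk : k ≤ m + 1) :
    (Seq.app (Seq.g C rbot h) (Seq.inter x o rbot k)).2.length
      = (m + 1) * h.2.length + k := by
  show (Seq.gList C rbot h.1.1 h.2 ++ Seq.inter x o rbot k).length = _
  rw [List.length_append, gList_length, inter_length _ _ _ _ hk]

end StructAux

namespace QAux
open StructAux

lemma bddOfAbs {ι : Sort*} (f : ι → ℝ) {M : ℝ} (h : ∀ i, |f i| ≤ M) :
    BddAbove (Set.range f) :=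
  ⟨M, by rintro _ ⟨i, rfl⟩; exact (abs_le.mp (h i)).2⟩

lemma abs_ciSup_le {ι : Sort*} [Nonempty ι] (f : ι → ℝ) {M : ℝ} (h : ∀ i, |f i| ≤ M) :
    |⨆ i, f i| ≤ M := by
  rw [abs_le]
  refine ⟨?_, ciSup_le fun i => (abs_le.mp (h i)).2⟩
  calc -M ≤ f (Classical.arbitrary ι) := (abs_le.mp (h _)).1
    _ ≤ ⨆ i, f i := le_ciSup (bddOfAbs f h) _

lemma abs_ciSup_sub_ciSup_le {ι : Sort*} [Nonempty ι] (f g : ι → ℝ) {Mf Mg E : ℝ}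
    (hf : ∀ i, |f i| ≤ Mf) (hg : ∀ i, |g i| ≤ Mg)
    (h : ∀ i, |f i - g i| ≤ E) : |(⨆ i, f i) - ⨆ i, g i| ≤ E := by
  rw [abs_sub_le_iff]
  constructor
  · rw [sub_le_iff_le_add, add_comm]
    refine ciSup_le fun i => ?_
    calc f i ≤ g i + E := by have := (abs_le.mp (h i)).2; linarith
      _ ≤ (⨆ i, g i) + E := add_le_add_left (le_ciSup (bddOfAbs g hg) i) E
  · rw [sub_le_iff_le_add, add_comm]
    refine ciSup_le fun i => ?_
    calc g i ≤ f i + E := by have := (abs_le.mp (h i)).1; linarith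
      _ ≤ (⨆ i, f i) + E := add_le_add_left (le_ciSup (bddOfAbs f hf) i) E

lemma sum_dummy {O R : Type} [Fintype O] [Fintype R] [DecidableEq O] [DecidableEq R]
    (L : O) (rb : R) (f : O → R → ℝ) :
    (∑ o' : O, ∑ r' : R, (if o' = L ∧ r' = rb then (1:ℝ) else 0) * f o' r') = f L rb := by
  simp [ite_and, ite_mul, Finset.sum_ite_eq']

lemma collapse {A B : Type} [Nonempty B] (f : A → ℝ) {M : ℝ} (hf : ∀ a, |f a| ≤ M)
    (p : B → A → Prop) (q : A → Prop) (inst : ∀ b, Nonempty {a // p b a})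
    (instq : Nonempty {a // q a})
    (hpq : ∀ b a, p b a → q a) (sel : A → B) (hsel : ∀ a, q a → p (sel a) a) :
    ⨆ b : B, ⨆ a : {a // p b a}, f a.val = ⨆ a : {a // q a}, f a.val := by
  have bq : BddAbove (Set.range fun a : {a // q a} => f a.val) :=
    bddOfAbs _ (fun a => hf a.val)
  have bp : ∀ b, BddAbove (Set.range fun a : {a // p b a} => f a.val) :=
    fun b => bddOfAbs _ (fun a => hf a.val)
  apply le_antisymm
  · refine ciSup_le fun b => ?_
    haveI := inst b
    haveI := instq
    exact ciSup_le fun a => le_ciSup bq ⟨a.val, hpq b a.val a.property⟩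
  · haveI := instq
    refine ciSup_le fun a => ?_
    have h1 : f a.val ≤ ⨆ a' : {a' // p (sel a.val) a'}, f a'.val := by
      haveI := inst (sel a.val)
      exact le_ciSup (bp (sel a.val)) ⟨a.val, hsel a.val a.property⟩
    refine h1.trans (le_ciSup (f := fun b => ⨆ a' : {a' // p b a'}, f a'.val) ?_ (sel a.val))
    refine bddOfAbs (M := M) _ (fun b => ?_)
    haveI := inst b
    exact abs_ciSup_le _ (fun a' => hf a'.val)

lemma ciSup_true_subtype {A : Type} [Nonempty A] (f : A → ℝ) {M : ℝ} (hf : ∀ a, |f a| ≤ M) :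
    ⨆ a : {a : A // True}, f a.val = ⨆ a, f a := by
  haveI : Nonempty {a : A // True} := ⟨⟨Classical.arbitrary A, trivial⟩⟩
  apply le_antisymm
  · exact ciSup_le fun a => le_ciSup (bddOfAbs f hf) a.val
  · exact ciSup_le fun a => le_ciSup (bddOfAbs _ (fun a : {a : A // True} => hf a.val)) ⟨a, trivial⟩

end QAux

open StructAux QAux

/-- `Q̲*` x-relationship. Let `Q*` be the (bounded) optimal
action-value function of the original environment `P` with discount `γ`, and `Q̲*`
that of the sequentialized environment `P̲` with discount `λ`, `λ^d = γ`
(`d = m+1`, dummy reward `ρ r⊥ = 0`). Then for any history `h` (with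
`τ = g(h)`), code `x ∈ B^d` and `1 ≤ i ≤ d` (written `i = k+1`, `k : Fin d`):
`Q̲*(τ⟨x o r⊥⟩_{<i}, x_i) = λ^(d-i) max_{a ∈ A(x_{≤i})} Q*(h,a)`,
and in particular for `i = d`:
`Q̲*(τ⟨x o r⊥⟩_{<d}, x_d) = Q*(h, D x)`. -/
theorem qbar_x_relationship {O R A B : Type} [Fintype O] [Fintype R] [Fintype A]
    [Fintype B] [DecidableEq O] [DecidableEq R] [Nonempty A] [Nonempty B] {m : ℕ}
    (ρ : R → ℝ) (rbot : R) (hρ : ρ rbot = 0)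
    (γ lam : ℝ) (hγ0 : 0 ≤ γ) (hγ1 : γ < 1) (hlam0 : 0 ≤ lam)
    (hlamd : lam ^ (m + 1) = γ)
    (C : A → Fin (m + 1) → B) (D : (Fin (m + 1) → B) → A)
    (hDC : ∀ a, D (C a) = a) (hCD : ∀ x, C (D x) = x)
    (P : Hist O R A → A → (O × R) → ℝ)
    (hP0 : ∀ h a y, 0 ≤ P h a y) (hP1 : ∀ h a, ∑ y : O × R, P h a y = 1)
    (Q : Hist O R A → A → ℝ) (hQbdd : ∃ M, ∀ h a, |Q h a| ≤ M)
    (hQOBE : ∀ h a, Q h a = ∑ o' : O, ∑ r' : R,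
        P h a (o', r') * (ρ r' + γ * ⨆ a', Q (Seq.ext h a o' r') a'))
    (Pb : Hist O R B → B → (O × R) → ℝ)
    (hPb0 : ∀ τ x y, 0 ≤ Pb τ x y) (hPb1 : ∀ τ x, ∑ y : O × R, Pb τ x y = 1)
    (hPbpartial : ∀ τ : Hist O R B, (τ.2.length + 1) % (m + 1) ≠ 0 → ∀ x o' r',
        Pb τ x (o', r') = if o' = Seq.lastObs τ ∧ r' = rbot then 1 else 0)
    (hPbcomplete : ∀ (h : Hist O R A) (a : A) (o' : O) (r' : R),
        Pb (Seq.app (Seq.g C rbot h) (Seq.inter (C a) (Seq.lastObs h) rbot m))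
            (C a (Fin.last m)) (o', r')
          = P h a (o', r'))
    (Qb : Hist O R B → B → ℝ) (hQbbdd : ∃ M, ∀ τ x, |Qb τ x| ≤ M)
    (hQbOBE : ∀ τ x, Qb τ x = ∑ o' : O, ∑ r' : R,
        Pb τ x (o', r') * (ρ r' + lam * ⨆ x', Qb (Seq.ext τ x o' r') x')) :
    (∀ (h : Hist O R A) (x : Fin (m + 1) → B) (k : Fin (m + 1)),
      Qb (Seq.app (Seq.g C rbot h) (Seq.inter x (Seq.lastObs h) rbot k.val)) (x k)
        = lam ^ (m - k.val) *
          ⨆ a : {a : A // ∀ j : Fin (m + 1), j ≤ k → C a j = x j}, Q h a.val) ∧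
    ∀ (h : Hist O R A) (x : Fin (m + 1) → B),
      Qb (Seq.app (Seq.g C rbot h) (Seq.inter x (Seq.lastObs h) rbot m))
          (x (Fin.last m))
        = Q h (D x) := by
  by_cases hOR : Nonempty (O × R)
  case neg =>
    refine ⟨fun h => absurd ⟨h.1⟩ hOR, fun h => absurd ⟨h.1⟩ hOR⟩
  -- nonempty case
  haveI : Nonempty O := ⟨hOR.some.1⟩
  haveI : Nonempty R := ⟨hOR.some.2⟩
  haveI hHA : Nonempty (Hist O R A) := ⟨⟨hOR.some, []⟩⟩
  obtain ⟨MQ, hMQ⟩ := hQbdd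
  obtain ⟨MQb, hMQb⟩ := hQbbdd
  have hMQ0 : 0 ≤ MQ := (abs_nonneg _).trans (hMQ (Classical.arbitrary _) (Classical.arbitrary _))
  have hMQb0 : 0 ≤ MQb := by
    have τ : Hist O R B := ⟨hOR.some, []⟩
    exact (abs_nonneg _).trans (hMQb τ (Classical.arbitrary _))
  have hlam1 : lam < 1 := by
    by_contra hc
    push_neg at hc
    have : (1:ℝ) ≤ lam ^ (m+1) := one_le_pow₀ hc
    rw [hlamd] at this; linarith
  -- nonempty subtypes
  have instNE : ∀ (x : Fin (m+1) → B) (k : Fin (m+1)),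
      Nonempty {a : A // ∀ j : Fin (m+1), j ≤ k → C a j = x j} :=
    fun x k => ⟨⟨D x, fun j _ => by rw [hCD]⟩⟩
  -- bound on the subtype suprema
  have hSb : ∀ (h : Hist O R A) (x : Fin (m+1) → B) (k : Fin (m+1)),
      |⨆ a : {a : A // ∀ j : Fin (m+1), j ≤ k → C a j = x j}, Q h a.val| ≤ MQ := by
    intro h x k
    haveI := instNE x k
    exact abs_ciSup_le _ (fun a => hMQ h a.val)
  -- S at last equals Q h (D x)
  have hSlast : ∀ (h : Hist O R A) (x : Fin (m+1) → B),
      (⨆ a : {a : A // ∀ j : Fin (m+1), j ≤ Fin.last m → C a j = x j}, Q h a.val)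
        = Q h (D x) := by
    intro h x
    haveI := instNE x (Fin.last m)
    apply le_antisymm
    · refine ciSup_le fun a => le_of_eq (congrArg (Q h) ?_)
      have hCa : C a.val = x := funext fun j => a.property j (Fin.le_last j)
      rw [← hDC a.val, hCa]
    · exact le_ciSup
        (bddOfAbs (fun a : {a : A // ∀ j : Fin (m+1), j ≤ Fin.last m → C a j = x j} =>
          Q h a.val) (fun a => hMQ h a.val))
        ⟨D x, fun j _ => by rw [hCD]⟩
  -- the error function and its supremum
  set err : Hist O R A × (Fin (m+1) → B) × Fin (m+1) → ℝ := fun p =>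
    |Qb (Seq.app (Seq.g C rbot p.1) (Seq.inter p.2.1 (Seq.lastObs p.1) rbot p.2.2.val))
        (p.2.1 p.2.2)
      - lam ^ (m - p.2.2.val) *
          ⨆ a : {a : A // ∀ j : Fin (m+1), j ≤ p.2.2 → C a j = p.2.1 j}, Q p.1 a.val|
    with herr
  have herrbd : ∀ p, err p ≤ MQb + MQ := by
    intro p
    rw [herr]
    refine (abs_sub _ _).trans (add_le_add (hMQb _ _) ?_)
    rw [abs_mul, abs_pow, abs_of_nonneg hlam0]
    calc lam ^ (m - p.2.2.val) * |_| ≤ 1 * MQ := by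
          exact mul_le_mul (pow_le_one₀ hlam0 hlam1.le) (hSb p.1 p.2.1 p.2.2)
            (abs_nonneg _) zero_le_one
      _ = MQ := one_mul MQ
  have hbddE : BddAbove (Set.range err) := bddOfAbs err (fun p => by
    rw [abs_of_nonneg (abs_nonneg _)]; exact herrbd p)
  set E := ⨆ p, err p with hE
  have herrle : ∀ (h : Hist O R A) (x : Fin (m+1) → B) (k : Fin (m+1)),
      |Qb (Seq.app (Seq.g C rbot h) (Seq.inter x (Seq.lastObs h) rbot k.val)) (x k)
        - lam ^ (m - k.val) *
            ⨆ a : {a : A // ∀ j : Fin (m+1), j ≤ k → C a j = x j}, Q h a.val| ≤ E :=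
    fun h x k => le_ciSup hbddE (h, x, k)
  have hE0 : 0 ≤ E := (abs_nonneg _).trans (herrle (Classical.arbitrary _)
    (Classical.arbitrary _) (Classical.arbitrary _))
  -- main contraction step
  have hstep : ∀ p, err p ≤ lam * E := by
    rintro ⟨h, x, k⟩
    rw [herr]
    simp only
    rcases Nat.lt_or_ge k.val m with hkm | hkm
    · -- dummy transition case
      set τ := Seq.app (Seq.g C rbot h) (Seq.inter x (Seq.lastObs h) rbot k.val) with hτ
      have hlen : (τ.2.length + 1) % (m + 1) ≠ 0 := by
        rw [hτ, T_length C rbot h x _ k.val (by omega)]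
        have h1 : (m+1) * h.2.length + k.val + 1 = (k.val + 1) + (m+1) * h.2.length := by ring
        rw [h1, Nat.add_mul_mod_self_left, Nat.mod_eq_of_lt (by omega)]
        omega
      have hLτ : Seq.lastObs τ = Seq.lastObs h := lastObs_T C rbot h x k.val
      set k' : Fin (m+1) := ⟨k.val + 1, by omega⟩ with hk'
      have hkv' : k'.val = k.val + 1 := rfl
      have hkk' : ¬ (k' ≤ k) := by rw [Fin.le_def, hkv']; omega
      have hext : ∀ b : B, Seq.ext τ (x k) (Seq.lastObs h) rbot
          = Seq.app (Seq.g C rbot h)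
              (Seq.inter (Function.update x k' b) (Seq.lastObs h) rbot k'.val) := by
        intro b
        rw [hτ, ext_app]
        congr 1
        have e1 : Seq.inter (Function.update x k' b) (Seq.lastObs h) rbot (k.val + 1)
            = Seq.inter x (Seq.lastObs h) rbot (k.val + 1) := by
          refine inter_congr _ _ _ _ _ (fun j hj => ?_)
          refine Function.update_of_ne (fun hc => ?_) b x
          rw [hc] at hj
          simp only [hk'] at hj
          omega
        have e2 : Seq.inter x (Seq.lastObs h) rbot (k.val + 1)
            = Seq.inter x (Seq.lastObs h) rbot k.val ++ [(x ⟨k.val, k.isLt⟩, Seq.lastObs h, rbot)] :=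
          inter_succ x _ _ k.val k.isLt
        show Seq.inter x (Seq.lastObs h) rbot k.val ++ [(x k, Seq.lastObs h, rbot)]
          = Seq.inter (Function.update x k' b) (Seq.lastObs h) rbot k'.val
        rw [show k'.val = k.val + 1 from rfl, e1, e2]
      have hQbτ : Qb τ (x k)
          = lam * ⨆ b : B, Qb (Seq.ext τ (x k) (Seq.lastObs h) rbot) b := by
        rw [hQbOBE τ (x k)]
        simp only [hPbpartial τ hlen (x k)]
        rw [sum_dummy (Seq.lastObs τ) rbot
          (fun o' r' => ρ r' + lam * ⨆ x', Qb (Seq.ext τ (x k) o' r') x'), hLτ, hρ, zero_add]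
      have key1 : ∀ b : B, |Qb (Seq.ext τ (x k) (Seq.lastObs h) rbot) b
          - lam ^ (m - k'.val) * ⨆ a : {a : A // ∀ j : Fin (m+1), j ≤ k' →
              C a j = Function.update x k' b j}, Q h a.val| ≤ E := by
        intro b
        rw [hext b]
        have h2 := herrle h (Function.update x k' b) k'
        rwa [Function.update_self] at h2
      have habs : |(⨆ b : B, Qb (Seq.ext τ (x k) (Seq.lastObs h) rbot) b)
          - ⨆ b : B, lam ^ (m - k'.val) * ⨆ a : {a : A // ∀ j : Fin (m+1), j ≤ k' →
              C a j = Function.update x k' b j}, Q h a.val| ≤ E := by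
        refine abs_ciSup_sub_ciSup_le _ _ (Mf := MQb) (Mg := MQ)
          (fun b => hMQb _ _) (fun b => ?_) key1
        rw [abs_mul, abs_pow, abs_of_nonneg hlam0]
        calc lam ^ (m - k'.val) * |_| ≤ 1 * MQ :=
              mul_le_mul (pow_le_one₀ hlam0 hlam1.le) (by
                haveI := instNE (Function.update x k' b) k'
                exact abs_ciSup_le _ (fun a => hMQ h a.val)) (abs_nonneg _) zero_le_one
          _ = MQ := one_mul MQ
      have hcol : (⨆ b : B, ⨆ a : {a : A // ∀ j : Fin (m+1), j ≤ k' →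
              C a j = Function.update x k' b j}, Q h a.val)
          = ⨆ a : {a : A // ∀ j : Fin (m+1), j ≤ k → C a j = x j}, Q h a.val := by
        refine collapse (Q h) (fun a => hMQ h a) _ _
          (fun b => instNE (Function.update x k' b) k') (instNE x k)
          (fun b a hp j hj => ?_) (fun a => C a k') (fun a hq j hj => ?_)
        · have h3 := hp j (by rw [Fin.le_def] at hj ⊢; rw [hkv']; omega)
          rwa [Function.update_of_ne (fun hc => by rw [hc] at hj; exact hkk' hj) b x] at h3
        · rcases eq_or_ne j k' with hjk | hjk
          · subst hjk
            rw [Function.update_self]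
          · rw [Function.update_of_ne hjk]
            refine hq j ?_
            rw [Fin.le_def] at hj ⊢
            rw [hkv'] at hj
            have hne : j.val ≠ k.val + 1 := fun hc => hjk (Fin.ext (hc.trans hkv'.symm))
            omega
      have hpull : (⨆ b : B, lam ^ (m - k'.val) * ⨆ a : {a : A // ∀ j : Fin (m+1), j ≤ k' →
              C a j = Function.update x k' b j}, Q h a.val)
          = lam ^ (m - k'.val) *
              ⨆ a : {a : A // ∀ j : Fin (m+1), j ≤ k → C a j = x j}, Q h a.val := by
        rw [← hcol]
        exact (Real.mul_iSup_of_nonneg (pow_nonneg hlam0 _) _).symm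
      have hexp : lam ^ (m - k.val) = lam * lam ^ (m - k'.val) := by
        rw [show m - k.val = (m - k'.val) + 1 from by rw [hkv']; omega, pow_succ']
      rw [hQbτ, hexp, mul_assoc, ← mul_sub, abs_mul, abs_of_nonneg hlam0]
      refine mul_le_mul_of_nonneg_left ?_ hlam0
      rw [← hpull]
      exact habs
    · -- real transition case
      have hkv : k.val = m := le_antisymm (by omega) hkm
      have hkl : k = Fin.last m := Fin.ext hkv
      subst hkl
      simp only [Fin.val_last, Nat.sub_self, pow_zero, one_mul]
      set τ := Seq.app (Seq.g C rbot h) (Seq.inter x (Seq.lastObs h) rbot m) with hτ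
      rw [hSlast h x]
      have hPbc : ∀ (o' : O) (r' : R),
          Pb τ (x (Fin.last m)) (o', r') = P h (D x) (o', r') := by
        intro o' r'
        have h2 := hPbcomplete h (D x) o' r'
        rwa [hCD] at h2
      have hexteq : ∀ (o' : O) (r' : R), Seq.ext τ (x (Fin.last m)) o' r'
          = Seq.g C rbot (Seq.ext h (D x) o' r') := by
        intro o' r'
        rw [g_ext, hCD, hτ, ext_app]
      have hinner : ∀ (o' : O) (r' : R),
          |(⨆ b : B, Qb (Seq.ext τ (x (Fin.last m)) o' r') b)
            - lam ^ m * ⨆ a' : A, Q (Seq.ext h (D x) o' r') a'| ≤ E := by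
        intro o' r'
        have z : Fin (m+1) := ⟨0, by omega⟩
        have hc2 : (⨆ b : B, ⨆ a : {a : A // ∀ j : Fin (m+1), j ≤ (⟨0, by omega⟩ : Fin (m+1)) →
                C a j = (fun _ => b) j}, Q (Seq.ext h (D x) o' r') a.val)
            = ⨆ a' : A, Q (Seq.ext h (D x) o' r') a' := by
          rw [collapse (Q (Seq.ext h (D x) o' r')) (fun a => hMQ _ a) _ (fun _ => True)
            (fun b => instNE (fun _ => b) ⟨0, by omega⟩)
            ⟨⟨Classical.arbitrary A, trivial⟩⟩ (fun b a _ => trivial)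
            (fun a => C a ⟨0, by omega⟩)
            (fun a _ j hj => by
              have hj0 : j = (⟨0, by omega⟩ : Fin (m+1)) := Fin.ext (Nat.le_zero.mp hj)
              rw [hj0])]
          exact ciSup_true_subtype _ (fun a => hMQ _ a)
        have hb : ∀ b : B, |Qb (Seq.ext τ (x (Fin.last m)) o' r') b
            - lam ^ m * ⨆ a : {a : A // ∀ j : Fin (m+1), j ≤ (⟨0, by omega⟩ : Fin (m+1)) →
                C a j = (fun _ => b) j}, Q (Seq.ext h (D x) o' r') a.val| ≤ E := by
          intro b
          have h2 := herrle (Seq.ext h (D x) o' r') (fun _ => b) ⟨0, by omega⟩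
          rw [inter_zero, app_nil, Nat.sub_zero] at h2
          rw [hexteq o' r']
          exact h2
        rw [show lam ^ m * (⨆ a' : A, Q (Seq.ext h (D x) o' r') a')
            = ⨆ b : B, lam ^ m * ⨆ a : {a : A // ∀ j : Fin (m+1), j ≤ (⟨0, by omega⟩ : Fin (m+1)) →
                C a j = (fun _ => b) j}, Q (Seq.ext h (D x) o' r') a.val from by
          rw [← hc2]
          exact Real.mul_iSup_of_nonneg (pow_nonneg hlam0 m) _]
        refine abs_ciSup_sub_ciSup_le _ _ (Mf := MQb) (Mg := MQ)
          (fun b => hMQb _ _) (fun b => ?_) hb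
        rw [abs_mul, abs_pow, abs_of_nonneg hlam0]
        calc lam ^ m * |_| ≤ 1 * MQ :=
              mul_le_mul (pow_le_one₀ hlam0 hlam1.le) (by
                haveI := instNE (fun _ => b) (⟨0, by omega⟩ : Fin (m+1))
                exact abs_ciSup_le _ (fun a => hMQ _ a.val)) (abs_nonneg _) zero_le_one
          _ = MQ := one_mul MQ
      have hQQ : Qb τ (x (Fin.last m)) - Q h (D x)
          = ∑ o' : O, ∑ r' : R, P h (D x) (o', r')
              * (lam * ((⨆ b : B, Qb (Seq.ext τ (x (Fin.last m)) o' r') b)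
                - lam ^ m * ⨆ a' : A, Q (Seq.ext h (D x) o' r') a')) := by
        rw [hQbOBE τ (x (Fin.last m)), hQOBE h (D x)]
        simp only [hPbc]
        rw [← Finset.sum_sub_distrib]
        refine Finset.sum_congr rfl fun o' _ => ?_
        rw [← Finset.sum_sub_distrib]
        refine Finset.sum_congr rfl fun r' _ => ?_
        rw [← hlamd, pow_succ]
        ring
      rw [hQQ]
      refine (Finset.abs_sum_le_sum_abs _ _).trans ?_
      have hrow : ∀ o' ∈ (Finset.univ : Finset O),
          |∑ r' : R, P h (D x) (o', r')
              * (lam * ((⨆ b : B, Qb (Seq.ext τ (x (Fin.last m)) o' r') b)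
                - lam ^ m * ⨆ a' : A, Q (Seq.ext h (D x) o' r') a'))|
            ≤ ∑ r' : R, P h (D x) (o', r') * (lam * E) := by
        intro o' _
        refine (Finset.abs_sum_le_sum_abs _ _).trans (Finset.sum_le_sum fun r' _ => ?_)
        rw [abs_mul, abs_mul, abs_of_nonneg (hP0 h (D x) (o', r')), abs_of_nonneg hlam0]
        exact mul_le_mul_of_nonneg_left
          (mul_le_mul_of_nonneg_left (hinner o' r') hlam0) (hP0 h (D x) (o', r'))
      refine (Finset.sum_le_sum hrow).trans (le_of_eq ?_)
      have hsum1 : ∑ o' : O, ∑ r' : R, P h (D x) (o', r') = 1 := by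
        rw [← Fintype.sum_prod_type]
        exact hP1 h (D x)
      calc ∑ o' : O, ∑ r' : R, P h (D x) (o', r') * (lam * E)
          = (∑ o' : O, ∑ r' : R, P h (D x) (o', r')) * (lam * E) := by
            rw [Finset.sum_mul]
            exact Finset.sum_congr rfl fun o' _ => (Finset.sum_mul _ _ _).symm
        _ = lam * E := by rw [hsum1, one_mul]
  have hElam : E ≤ lam * E := ciSup_le hstep
  have hEzero : E = 0 := le_antisymm (by nlinarith) hE0
  have key : ∀ (h : Hist O R A) (x : Fin (m + 1) → B) (k : Fin (m + 1)),
      Qb (Seq.app (Seq.g C rbot h) (Seq.inter x (Seq.lastObs h) rbot k.val)) (x k)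
        = lam ^ (m - k.val) *
          ⨆ a : {a : A // ∀ j : Fin (m + 1), j ≤ k → C a j = x j}, Q h a.val := by
    intro h x k
    have := herrle h x k
    rw [hEzero] at this
    exact eq_of_abs_sub_nonpos this
  refine ⟨key, fun h x => ?_⟩
  have := key h x (Fin.last m)
  simp only [Fin.val_last, Nat.sub_self, pow_zero, one_mul] at this
  rw [this, hSlast h x]
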